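/- Let S be Stallings' group, given by the presentation ⟨a, b, c, d, e | b⁻¹ab = c⁻¹ac, b⁻¹ab = d⁻¹ad, b⁻¹ab = e⁻¹ae, [c,d] = 1, [d,b] = 1, [e,c] = 1, [e,b] = 1⟩. Then the third integral homology group H₃(S; ℤ) (group homology of S with trivial ℤ coefficients in degree 3) is not finitely generated as an abelian group. -/

import Mathlib

/-! Group homology with trivial `ℤ` coefficients, via the standard (inhomogeneous bar)
chain complex `⋯ → ℤ[G³] → ℤ[G²] → ℤ[G] → ℤ`, whose `n`-th term is the free `ℤ`-module on
`Gⁿ` and whose differential is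
`d(g₁, …, gₙ) = (g₂, …, gₙ) + Σᵢ (-1)ⁱ (g₁, …, gᵢgᵢ₊₁, …, gₙ) + (-1)ⁿ (g₁, …, gₙ₋₁)`. -/

/-- The bar differential `ℤ[G³] → ℤ[G²]`:
`d(g, h, k) = (h, k) - (gh, k) + (g, hk) - (g, h)`. -/
noncomputable def barD3 (G : Type*) [Group G] :
    ((G × G × G) →₀ ℤ) →ₗ[ℤ] ((G × G) →₀ ℤ) :=
  Finsupp.lift _ ℤ _ fun x =>
    Finsupp.single (x.2.1, x.2.2) 1 - Finsupp.single (x.1 * x.2.1, x.2.2) 1 +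
      Finsupp.single (x.1, x.2.1 * x.2.2) 1 - Finsupp.single (x.1, x.2.1) 1

/-- The bar differential `ℤ[G⁴] → ℤ[G³]`:
`d(g, h, k, l) = (h, k, l) - (gh, k, l) + (g, hk, l) - (g, h, kl) + (g, h, k)`. -/
noncomputable def barD4 (G : Type*) [Group G] :
    ((G × G × G × G) →₀ ℤ) →ₗ[ℤ] ((G × G × G) →₀ ℤ) :=
  Finsupp.lift _ ℤ _ fun x =>
    Finsupp.single (x.2.1, x.2.2.1, x.2.2.2) 1
      - Finsupp.single (x.1 * x.2.1, x.2.2.1, x.2.2.2) 1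
      + Finsupp.single (x.1, x.2.1 * x.2.2.1, x.2.2.2) 1
      - Finsupp.single (x.1, x.2.1, x.2.2.1 * x.2.2.2) 1
      + Finsupp.single (x.1, x.2.1, x.2.2.1) 1

/-- The third integral homology group `H₃(G; ℤ)` of a group `G` (group homology with trivial
`ℤ` coefficients), computed as `ker d₃ / im d₄` in the bar complex. -/
noncomputable abbrev H3 (G : Type*) [Group G] :=
  LinearMap.ker (barD3 G) ⧸
    Submodule.comap (LinearMap.ker (barD3 G)).subtype (LinearMap.range (barD4 G))

namespace Stallings

noncomputable def a : FreeGroup (Fin 5) := FreeGroup.of 0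
noncomputable def b : FreeGroup (Fin 5) := FreeGroup.of 1
noncomputable def c : FreeGroup (Fin 5) := FreeGroup.of 2
noncomputable def d : FreeGroup (Fin 5) := FreeGroup.of 3
noncomputable def e : FreeGroup (Fin 5) := FreeGroup.of 4

/-- The seven relators of Stallings' group `S`:
`b⁻¹ab(c⁻¹ac)⁻¹, b⁻¹ab(d⁻¹ad)⁻¹, b⁻¹ab(e⁻¹ae)⁻¹, [c,d], [d,b], [e,c], [e,b]`,
where `[x,y] = x⁻¹y⁻¹xy`. -/
noncomputable def stallingsRelators : Set (FreeGroup (Fin 5)) :=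
  {b⁻¹ * a * b * (c⁻¹ * a * c)⁻¹, b⁻¹ * a * b * (d⁻¹ * a * d)⁻¹,
   b⁻¹ * a * b * (e⁻¹ * a * e)⁻¹,
   c⁻¹ * d⁻¹ * c * d, d⁻¹ * b⁻¹ * d * b, e⁻¹ * c⁻¹ * e * c, e⁻¹ * b⁻¹ * e * b}

/-- Stallings' group `S`. -/
noncomputable abbrev StallingsGroup : Type :=
  FreeGroup (Fin 5) ⧸ Subgroup.normalClosure stallingsRelators

/-! ### Auxiliary development -/

noncomputable section Aux

/-- Laurent polynomials `ℤ[t,t⁻¹]`. -/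
abbrev LA : Type := AddMonoidAlgebra ℤ ℤ

/-- The monomial `t^k`. -/
def tt (k : ℤ) : LA := AddMonoidAlgebra.single k 1

lemma tt_mul (x y : ℤ) : tt x * tt y = tt (x + y) := by
  unfold tt; rw [AddMonoidAlgebra.single_mul_single, one_mul]

lemma tt_zero : tt 0 = 1 := rfl

/-- The group `W = ℤ[t,t⁻¹]³ ⋊ ℤ²` (the kernel of `(ℤ≀ℤ)³ → ℤ`). -/
@[ext] structure W where
  p : LA
  q : LA
  r : LA
  m : ℤ
  n : ℤ

namespace W

def wMul (g h : W) : W := ⟨g.p + tt g.m * h.p, g.q + tt g.n * h.q,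
    g.r + tt (-g.m - g.n) * h.r, g.m + h.m, g.n + h.n⟩

def wInv (g : W) : W :=
  ⟨-(tt (-g.m) * g.p), -(tt (-g.n) * g.q), -(tt (g.m + g.n) * g.r), -g.m, -g.n⟩

lemma ext5 {g h : W} (h1 : g.p = h.p) (h2 : g.q = h.q) (h3 : g.r = h.r)
    (h4 : g.m = h.m) (h5 : g.n = h.n) : g = h := by
  cases g; cases h; simp_all

instance : Group W where
  mul := wMul
  one := ⟨0, 0, 0, 0, 0⟩
  inv := wInv
  mul_assoc g h k := by
    show wMul (wMul g h) k = wMul g (wMul h k)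
    unfold wMul
    refine ext5 ?_ ?_ ?_ ?_ ?_ <;> simp only [mul_add, ← mul_assoc, tt_mul]
    · rw [add_assoc]
    · rw [add_assoc]
    · rw [add_assoc, show -g.m - g.n + (-h.m - h.n) = -(g.m + h.m) - (g.n + h.n) by ring]
    · ring
    · ring
  one_mul g := by
    show wMul ⟨0,0,0,0,0⟩ g = g
    unfold wMul
    refine ext5 ?_ ?_ ?_ ?_ ?_ <;> simp [tt_zero]
  mul_one g := by
    show wMul g ⟨0,0,0,0,0⟩ = g
    unfold wMul
    refine ext5 ?_ ?_ ?_ ?_ ?_ <;> simp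
  inv_mul_cancel g := by
    show wMul (wInv g) g = ⟨0,0,0,0,0⟩
    unfold wMul wInv
    refine ext5 ?_ ?_ ?_ ?_ ?_ <;> simp [← mul_assoc, tt_mul]

lemma mul_def (g h : W) : g * h = ⟨g.p + tt g.m * h.p, g.q + tt g.n * h.q,
    g.r + tt (-g.m - g.n) * h.r, g.m + h.m, g.n + h.n⟩ := rfl

lemma one_def : (1 : W) = ⟨0, 0, 0, 0, 0⟩ := rfl

lemma inv_def (g : W) :
    g⁻¹ = ⟨-(tt (-g.m) * g.p), -(tt (-g.n) * g.q), -(tt (g.m + g.n) * g.r), -g.m, -g.n⟩ := rfl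

end W

/-- The homomorphism `FreeGroup (Fin 5) → W` on generators. -/
def wmap : Fin 5 → W :=
  ![⟨-(tt 0), 0, 0, 0, 0⟩, ⟨0,0,0,1,-1⟩, ⟨0, -(tt (-1)), 0, 1, -1⟩,
    ⟨0,0,0,1,0⟩, ⟨0,0,-(tt (-1)),1,0⟩]

def ψ₀ : FreeGroup (Fin 5) →* W := FreeGroup.lift wmap

lemma ψ₀_relators : ∀ x ∈ stallingsRelators, ψ₀ x = 1 := by
  intro x hx
  rcases hx with h | h | h | h | h | h | h <;> subst h <;>
    simp [ψ₀, a, b, c, d, e, wmap, stallingsRelators, W.mul_def, W.inv_def, W.one_def,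
      tt_mul, mul_add, ← mul_assoc, W.mk.injEq]

/-- The homomorphism `ψ : S → W`. -/
def ψ : StallingsGroup →* W :=
  QuotientGroup.lift _ ψ₀ (fun x hx =>
    Subgroup.normalClosure_le_normal (N := ψ₀.ker) (fun y hy => ψ₀_relators y hy) hx)

/-- The ring identity behind the cocycle property. -/
lemma key (p1 p2 q2 q3 r3 r4 : LA) (m1 n1 m2 n2 m3 n3 : ℤ) :
    p2 * (tt n2 * q3) * (tt (-m2-n2-m3-n3) * r4)
    - (p1 + tt m1 * p2) * (tt (n1+n2) * q3) * (tt (-(m1+m2)-(n1+n2)-m3-n3) * r4)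
    + p1 * (tt n1 * (q2 + tt n2 * q3)) * (tt (-m1-n1-(m2+m3)-(n2+n3)) * r4)
    - p1 * (tt n1 * q2) * (tt (-m1-n1-m2-n2) * (r3 + tt (-m3-n3) * r4))
    + p1 * (tt n1 * q2) * (tt (-m1-n1-m2-n2) * r3) = 0 := by
  have ttA : ∀ (x y : ℤ) (u : LA), tt x * (tt y * u) = tt (x+y) * u := by
    intro x y u; rw [← mul_assoc, tt_mul]
  have canon : ∀ (x y : ℤ) (u v w : LA), u * (tt x * v) * (tt y * w) = tt (x+y) * (u*(v*w)) := by
    intro x y u v w; rw [← tt_mul]; ring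
  have canon3 : ∀ (x y z : ℤ) (u v w : LA),
      (tt x * u) * (tt y * v) * (tt z * w) = tt (x+(y+z)) * (u*(v*w)) := by
    intro x y z u v w; rw [← tt_mul, ← tt_mul]; ring
  simp only [mul_add, add_mul, ttA, canon3, canon]
  ring_nf

/-- The 3-cocycle on `W` with parameter `s`. -/
def fW (s : ℤ) (x : W × W × W) : ℤ :=
  (x.1.p * (tt x.1.n * x.2.1.q)
    * (tt (-x.1.m - x.1.n - x.2.1.m - x.2.1.n) * x.2.2.r)).coeff s

lemma fW_cocycle (s : ℤ) (g1 g2 g3 g4 : W) :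
    fW s (g2,g3,g4) - fW s (g1*g2,g3,g4) + fW s (g1,g2*g3,g4)
      - fW s (g1,g2,g3*g4) + fW s (g1,g2,g3) = 0 := by
  have h := key g1.p g2.p g2.q g3.q g3.r g4.r g1.m g1.n g2.m g2.n g3.m g3.n
  have h2 := congrArg (fun f : LA => f.coeff s) h
  simp only [AddMonoidAlgebra.coeff_sub, AddMonoidAlgebra.coeff_add, AddMonoidAlgebra.coeff_zero, Finsupp.sub_apply, Finsupp.add_apply, Finsupp.coe_zero, Pi.zero_apply] at h2
  simp only [fW, W.mul_def]
  exact h2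

/-- The pulled-back functional on the bar 3-chains of `S`. -/
def lam (s : ℤ) :
    ((StallingsGroup × StallingsGroup × StallingsGroup) →₀ ℤ) →ₗ[ℤ] ℤ :=
  Finsupp.lift ℤ ℤ _ (fun x => fW s (ψ x.1, ψ x.2.1, ψ x.2.2))

lemma lam_single (s : ℤ) (x : StallingsGroup × StallingsGroup × StallingsGroup) (k : ℤ) :
    lam s (Finsupp.single x k) = k * fW s (ψ x.1, ψ x.2.1, ψ x.2.2) := by
  simp [lam, Finsupp.lift_apply, Finsupp.sum_single_index]

lemma lam_barD4 (s : ℤ) :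
    (lam s).comp (barD4 StallingsGroup) = 0 := by
  apply Finsupp.lhom_ext
  intro x k
  have hb : barD4 StallingsGroup (Finsupp.single x k) =
      k • (Finsupp.single (x.2.1, x.2.2.1, x.2.2.2) 1
      - Finsupp.single (x.1 * x.2.1, x.2.2.1, x.2.2.2) 1
      + Finsupp.single (x.1, x.2.1 * x.2.2.1, x.2.2.2) 1
      - Finsupp.single (x.1, x.2.1, x.2.2.1 * x.2.2.2) 1
      + Finsupp.single (x.1, x.2.1, x.2.2.1) 1) := by
    simp [barD4, Finsupp.lift_apply, Finsupp.sum_single_index]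
  rw [LinearMap.comp_apply, hb, map_smul]
  have : lam s (Finsupp.single (x.2.1, x.2.2.1, x.2.2.2) 1
      - Finsupp.single (x.1 * x.2.1, x.2.2.1, x.2.2.2) 1
      + Finsupp.single (x.1, x.2.1 * x.2.2.1, x.2.2.2) 1
      - Finsupp.single (x.1, x.2.1, x.2.2.1 * x.2.2.2) 1
      + Finsupp.single (x.1, x.2.1, x.2.2.1) 1) = 0 := by
    simp only [map_sub, map_add, lam_single, one_mul, map_mul]
    exact fW_cocycle s (ψ x.1) (ψ x.2.1) (ψ x.2.2.1) (ψ x.2.2.2)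
  rw [this, smul_zero]
  rfl

/-! ### Elements of Stallings' group -/

/-- Images of the generators in `S`. -/
def sa : StallingsGroup := QuotientGroup.mk a
def sb : StallingsGroup := QuotientGroup.mk b
def sc : StallingsGroup := QuotientGroup.mk c
def sd : StallingsGroup := QuotientGroup.mk d
def se : StallingsGroup := QuotientGroup.mk e

lemma rel_of_mem {x : FreeGroup (Fin 5)} (hx : x ∈ stallingsRelators) :
    (QuotientGroup.mk x : StallingsGroup) = 1 :=
  (QuotientGroup.eq_one_iff x).2 (Subgroup.subset_normalClosure hx)

lemma mk_mul (x y : FreeGroup (Fin 5)) :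
    (QuotientGroup.mk (x * y) : StallingsGroup) =
      QuotientGroup.mk x * QuotientGroup.mk y := rfl

lemma mk_inv (x : FreeGroup (Fin 5)) :
    (QuotientGroup.mk x⁻¹ : StallingsGroup) = (QuotientGroup.mk x)⁻¹ := rfl

lemma conj_bc : sb⁻¹ * sa * sb = sc⁻¹ * sa * sc := by
  have h := rel_of_mem (show b⁻¹ * a * b * (c⁻¹ * a * c)⁻¹ ∈ stallingsRelators by
    simp [stallingsRelators])
  simp only [mk_mul, mk_inv] at h
  exact mul_inv_eq_one.mp h

lemma conj_bd : sb⁻¹ * sa * sb = sd⁻¹ * sa * sd := by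
  have h := rel_of_mem (show b⁻¹ * a * b * (d⁻¹ * a * d)⁻¹ ∈ stallingsRelators by
    simp [stallingsRelators])
  simp only [mk_mul, mk_inv] at h
  exact mul_inv_eq_one.mp h

lemma conj_be : sb⁻¹ * sa * sb = se⁻¹ * sa * se := by
  have h := rel_of_mem (show b⁻¹ * a * b * (e⁻¹ * a * e)⁻¹ ∈ stallingsRelators by
    simp [stallingsRelators])
  simp only [mk_mul, mk_inv] at h
  exact mul_inv_eq_one.mp h

lemma comm_helper {x y : StallingsGroup} (h : x⁻¹ * y⁻¹ * x * y = 1) :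
    x * y = y * x := by
  calc x * y = y * x * (x⁻¹ * y⁻¹ * x * y) := by group
  _ = y * x := by rw [h, mul_one]

lemma comm_cd : sc * sd = sd * sc := by
  refine comm_helper ?_
  exact rel_of_mem (show c⁻¹ * d⁻¹ * c * d ∈ stallingsRelators by simp [stallingsRelators])

lemma comm_db : sd * sb = sb * sd := by
  refine comm_helper ?_
  exact rel_of_mem (show d⁻¹ * b⁻¹ * d * b ∈ stallingsRelators by simp [stallingsRelators])

lemma comm_ec : se * sc = sc * se := by
  refine comm_helper ?_
  exact rel_of_mem (show e⁻¹ * c⁻¹ * e * c ∈ stallingsRelators by simp [stallingsRelators])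

lemma comm_eb : se * sb = sb * se := by
  refine comm_helper ?_
  exact rel_of_mem (show e⁻¹ * b⁻¹ * e * b ∈ stallingsRelators by simp [stallingsRelators])

/-- "Common conjugate property". -/
def CCP (x : StallingsGroup) : Prop :=
  sb⁻¹ * x * sb = sc⁻¹ * x * sc ∧ sb⁻¹ * x * sb = sd⁻¹ * x * sd ∧
    sb⁻¹ * x * sb = se⁻¹ * x * se

lemma ccp_sa : CCP sa := ⟨conj_bc, conj_bd, conj_be⟩

lemma conj_swap {u v x : StallingsGroup} (h : u * v = v * u) :
    v⁻¹ * (u⁻¹ * x * u) * v = u⁻¹ * (v⁻¹ * x * v) * u := by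
  have h1 : v⁻¹ * (u⁻¹ * x * u) * v = (u * v)⁻¹ * x * (u * v) := by group
  have h2 : u⁻¹ * (v⁻¹ * x * v) * u = (v * u)⁻¹ * x * (v * u) := by group
  rw [h1, h2, h]

lemma ccp_step {x : StallingsGroup} (hx : CCP x) : CCP (sb⁻¹ * x * sb) := by
  obtain ⟨hc, hd, he⟩ := hx
  have hyb : sb⁻¹ * (sb⁻¹ * x * sb) * sb = sd⁻¹ * (sb⁻¹ * x * sb) * sd := by
    conv_lhs => rw [hd]
    exact conj_swap comm_db
  have hyc : sc⁻¹ * (sb⁻¹ * x * sb) * sc = sd⁻¹ * (sb⁻¹ * x * sb) * sd := by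
    conv_lhs => rw [hd]
    rw [conj_swap comm_cd.symm, ← hc]
  have hye : se⁻¹ * (sb⁻¹ * x * sb) * se = sc⁻¹ * (sb⁻¹ * x * sb) * sc := by
    conv_lhs => rw [hc]
    rw [conj_swap comm_ec.symm, ← he]
  exact ⟨hyb.trans hyc.symm, hyb, (hyb.trans hyc.symm).trans hye.symm⟩

/-- The sequence `aₙ = b⁻ⁿ a bⁿ`. -/
def sα : ℕ → StallingsGroup
  | 0 => sa
  | n+1 => sb⁻¹ * sα n * sb

lemma ccp_sα (n : ℕ) : CCP (sα n) := by
  induction n with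
  | zero => exact ccp_sa
  | succ n ih => exact ccp_step ih

def β : StallingsGroup := sb * sc⁻¹
def γ : StallingsGroup := sd * se⁻¹

lemma comm_of_conj_eq {u v x : StallingsGroup} (h : u⁻¹ * x * u = v⁻¹ * x * v) :
    x * (u * v⁻¹) = (u * v⁻¹) * x := by
  calc x * (u * v⁻¹) = u * (u⁻¹ * x * u) * v⁻¹ := by group
  _ = u * (v⁻¹ * x * v) * v⁻¹ := by rw [h]
  _ = (u * v⁻¹) * x := by group

lemma comm_αβ (n : ℕ) : sα n * β = β * sα n :=
  comm_of_conj_eq (ccp_sα n).1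
lemma comm_αγ (n : ℕ) : sα n * γ = γ * sα n := by
  have h := ((ccp_sα n).2.1).symm.trans (ccp_sα n).2.2
  exact comm_of_conj_eq h
lemma comm_βγ : β * γ = γ * β := by
  have h1 : Commute sb sd := comm_db.symm
  have h2 : Commute sb se := comm_eb.symm
  have h3 : Commute sc sd := comm_cd
  have h4 : Commute sc se := comm_ec.symm
  exact ((h1.mul_right h2.inv_right).mul_left ((h3.mul_right h4.inv_right).inv_left))

/-! ### The torus cycles -/

lemma barD3_single {G : Type*} [Group G] (x : G × G × G) :
    barD3 G (Finsupp.single x 1) =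
      Finsupp.single (x.2.1, x.2.2) 1 - Finsupp.single (x.1 * x.2.1, x.2.2) 1 +
      Finsupp.single (x.1, x.2.1 * x.2.2) 1 - Finsupp.single (x.1, x.2.1) 1 := by
  simp [barD3, Finsupp.lift_apply, Finsupp.sum_single_index]

/-- The bar 3-cycle associated to a commuting triple. -/
def torus {G : Type*} [Group G] (x y z : G) : (G × G × G) →₀ ℤ :=
  Finsupp.single (x,y,z) 1 - Finsupp.single (y,x,z) 1 + Finsupp.single (y,z,x) 1
    - Finsupp.single (x,z,y) 1 + Finsupp.single (z,x,y) 1 - Finsupp.single (z,y,x) 1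

lemma torus_cycle {G : Type*} [Group G] {x y z : G}
    (hxy : x*y = y*x) (hxz : x*z = z*x) (hyz : y*z = z*y) :
    barD3 G (torus x y z) = 0 := by
  unfold torus
  simp only [map_sub, map_add, barD3_single]
  rw [← hxy, ← hxz, ← hyz]
  abel

/-- The cycles `z n`. -/
def zc (n : ℕ) : (StallingsGroup × StallingsGroup × StallingsGroup) →₀ ℤ :=
  torus (sα n) β γ

lemma zc_cycle (n : ℕ) : barD3 StallingsGroup (zc n) = 0 :=
  torus_cycle (comm_αβ n) (comm_αγ n) comm_βγ

/-! ### Images under ψ -/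

lemma ψ_sα (n : ℕ) : ψ (sα n) = ⟨-(tt (-(n:ℤ))), 0, 0, 0, 0⟩ := by
  induction n with
  | zero =>
    show ψ₀ a = _
    simp [ψ₀, a, wmap]
  | succ n ih =>
    have hb : ψ sb = ⟨0,0,0,1,-1⟩ := by
      show ψ₀ b = _
      simp [ψ₀, b, wmap]
    show ψ (sb⁻¹ * sα n * sb) = _
    rw [map_mul, map_mul, map_inv, hb, ih]
    refine W.ext5 ?_ ?_ ?_ ?_ ?_ <;>
      simp [W.mul_def, W.inv_def, tt_mul, ← mul_assoc]

lemma ψ_β : ψ β = ⟨0, tt (-1), 0, 0, 0⟩ := by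
  have hb : ψ sb = ⟨0,0,0,1,-1⟩ := by show ψ₀ b = _; simp [ψ₀, b, wmap]
  have hc : ψ sc = ⟨0, -(tt (-1)), 0, 1, -1⟩ := by show ψ₀ c = _; simp [ψ₀, c, wmap]
  show ψ (sb * sc⁻¹) = _
  rw [map_mul, map_inv, hb, hc]
  refine W.ext5 ?_ ?_ ?_ ?_ ?_ <;>
    simp [W.mul_def, W.inv_def, tt_mul, ← mul_assoc] <;> norm_num

lemma ψ_γ : ψ γ = ⟨0, 0, tt (-1), 0, 0⟩ := by
  have hd : ψ sd = ⟨0,0,0,1,0⟩ := by show ψ₀ d = _; simp [ψ₀, d, wmap]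
  have he : ψ se = ⟨0,0,-(tt (-1)),1,0⟩ := by show ψ₀ e = _; simp [ψ₀, e, wmap]
  show ψ (sd * se⁻¹) = _
  rw [map_mul, map_inv, hd, he]
  refine W.ext5 ?_ ?_ ?_ ?_ ?_ <;>
    simp [W.mul_def, W.inv_def, tt_mul, ← mul_assoc] <;> norm_num

/-! ### The pairing -/

lemma fW_shift0 (s : ℤ) (x y z : W) (hx : x.m = 0) (hxn : x.n = 0) (hy : y.m = 0)
    (hyn : y.n = 0) : fW s (x, y, z) = (x.p * y.q * z.r).coeff s := by
  simp [fW, hx, hxn, hy, hyn, tt_zero]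

lemma lam_zc (s : ℤ) (n : ℕ) :
    lam s (zc n) = -(if -(n:ℤ) - 2 = s then 1 else 0) := by
  unfold zc torus
  simp only [map_sub, map_add, lam_single, one_mul]
  simp only [ψ_sα, ψ_β, ψ_γ]
  simp [fW, tt_mul, tt_zero, mul_zero, zero_mul, mul_assoc]
  rw [show (-(n:ℤ) + -1 + -1) = -(n:ℤ) - 2 by ring]
  rw [show ∀ k : ℤ, tt k = LaurentPolynomial.T k from fun _ => rfl]
  rw [show ∀ (k s : ℤ), (LaurentPolynomial.T k : LA).coeff s = if k = s then 1 else 0 from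
    fun k s => by rw [LaurentPolynomial.T]; exact Finsupp.single_apply]

/-- The induced functionals on `H3`. -/
def Lmap (m : ℕ) : H3 StallingsGroup →ₗ[ℤ] ℤ :=
  Submodule.liftQ _ ((lam (-(m:ℤ)-2)).comp (LinearMap.ker (barD3 StallingsGroup)).subtype)
    (by
      intro x hx
      obtain ⟨y, hy⟩ := Submodule.mem_comap.mp hx
      have h0 : lam (-(m:ℤ)-2) (barD4 StallingsGroup y) = 0 := by
        have := congrArg (fun f => f y) (lam_barD4 (-(m:ℤ)-2))
        simpa using this
      rw [hy] at h0
      simpa using h0)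

def zeta (n : ℕ) : LinearMap.ker (barD3 StallingsGroup) :=
  ⟨zc n, LinearMap.mem_ker.mpr (zc_cycle n)⟩

lemma Lmap_zeta (m n : ℕ) :
    Lmap m (Submodule.Quotient.mk (zeta n)) = -(if m = n then 1 else 0) := by
  rw [Lmap, Submodule.liftQ_apply]
  have : lam (-(m:ℤ)-2) (zc n) = -(if -(n:ℤ) - 2 = -(m:ℤ)-2 then 1 else 0) := lam_zc _ n
  simp only [LinearMap.comp_apply, Submodule.coe_subtype, zeta, this]
  congr 1
  by_cases h : m = n <;> simp [h] <;> omega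

/-- The combined map `H3(S) → (ℕ → ℤ)`. -/
def Phi : H3 StallingsGroup →ₗ[ℤ] (ℕ → ℤ) := LinearMap.pi Lmap

lemma Phi_v (n : ℕ) :
    Phi (Submodule.Quotient.mk (zeta n)) = Pi.single n (-1 : ℤ) := by
  funext m
  rw [Phi, LinearMap.pi_apply, Lmap_zeta]
  rcases eq_or_ne m n with h | h
  · subst h; simp
  · simp [h, Pi.single_apply, Ne.symm h]

lemma indep_single : LinearIndependent ℤ (fun n : ℕ => Pi.single n (-1 : ℤ) : ℕ → ℕ → ℤ) := by
  rw [linearIndependent_iff']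
  intro s g hsum i hi
  have h := congrFun hsum i
  rw [Finset.sum_apply] at h
  have h2 : ∀ j ∈ s, j ≠ i → (g j • (Pi.single j (-1 : ℤ) : ℕ → ℤ)) i = 0 := by
    intro j _ hj
    simp [Pi.single_apply, hj, Ne.symm hj]
  rw [Finset.sum_eq_single i (fun j hj hne => h2 j hj hne) (fun h' => absurd hi h')] at h
  simpa using h

end Aux


/-- The third integral homology group `H₃(S; ℤ)` of Stallings' group `S` is not
finitely generated as an abelian group. -/
theorem h3_stallingsGroup_not_fg : ¬ AddGroup.FG (H3 StallingsGroup) := by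
  intro hFG
  have hfin : Module.Finite ℤ (H3 StallingsGroup) := Module.Finite.iff_addGroup_fg.mpr hFG
  have hcomp : Phi ∘ (fun n : ℕ => (Submodule.Quotient.mk (zeta n) : H3 StallingsGroup)) =
      fun n : ℕ => Pi.single n (-1 : ℤ) := by
    funext n; exact Phi_v n
  have hv : LinearIndependent ℤ
      (fun n : ℕ => (Submodule.Quotient.mk (zeta n) : H3 StallingsGroup)) := by
    apply LinearIndependent.of_comp Phi
    rw [hcomp]
    exact indep_single
  have h1 : (Cardinal.aleph0 : Cardinal) ≤ Module.rank ℤ (H3 StallingsGroup) :=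
    hv.aleph0_le_rank
  have h2 : Module.rank ℤ (H3 StallingsGroup) < Cardinal.aleph0 :=
    Module.rank_lt_aleph0 ℤ _
  exact absurd h1 (not_le.mpr h2)


end Stallings
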